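/- Let $\{a_k\}_{k\ge 0}$ be a non-negative real sequence, $\xi > 0$, and define $b_k = \sum_{j=0}^k a_j$. Then $\sum_{j=0}^k \frac{a_j}{\xi + b_j} \le \log\big(\frac{\xi + b_k}{\xi}\big)$. -/

import Mathlib

lemma aux_step (y d : ℝ) (hy : 0 < y) (hd : 0 ≤ d) :
    d / (y + d) ≤ Real.log ((y + d) / y) := by
  have hyd : 0 < y + d := by linarith
  have h1 : Real.log (y / (y + d)) ≤ y / (y + d) - 1 :=
    Real.log_le_sub_one_of_pos (by positivity)
  have h2 : Real.log ((y + d) / y) = - Real.log (y / (y + d)) := by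
    rw [← Real.log_inv]
    congr 1
    field_simp
  rw [h2]
  have : y / (y + d) - 1 = -(d / (y + d)) := by field_simp; ring
  linarith [h1.trans_eq this]

theorem stmt_1 (a : ℕ → ℝ) (ha : ∀ k, 0 ≤ a k) (ξ : ℝ) (hξ : 0 < ξ)
    (b : ℕ → ℝ) (hb : ∀ k, b k = ∑ j ∈ Finset.range (k + 1), a j) (k : ℕ) :
    ∑ j ∈ Finset.range (k + 1), a j / (ξ + b j) ≤ Real.log ((ξ + b k) / ξ) := by
  have hbnn : ∀ k, 0 ≤ b k := by
    intro k; rw [hb k]; exact Finset.sum_nonneg fun j _ => ha j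
  induction k with
  | zero =>
    rw [Finset.sum_range_one]
    have hb0 : b 0 = a 0 := by rw [hb 0]; simp
    rw [hb0]
    exact aux_step ξ (a 0) hξ (ha 0)
  | succ n ih =>
    rw [Finset.sum_range_succ]
    have hstep : b (n + 1) = b n + a (n + 1) := by
      rw [hb (n + 1), hb n, Finset.sum_range_succ]
    have h1 : a (n + 1) / (ξ + b (n + 1)) ≤
        Real.log ((ξ + b (n + 1)) / (ξ + b n)) := by
      have h := aux_step (ξ + b n) (a (n + 1)) (by linarith [hbnn n]) (ha (n + 1))
      rw [hstep, ← add_assoc]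
      exact h
    have hn : (0:ℝ) < ξ + b n := by linarith [hbnn n]
    have hn1 : (0:ℝ) < ξ + b (n + 1) := by linarith [hbnn (n + 1)]
    have hlog : Real.log ((ξ + b (n + 1)) / ξ) =
        Real.log ((ξ + b n) / ξ) + Real.log ((ξ + b (n + 1)) / (ξ + b n)) := by
      set x := ξ + b n with hx
      set y := ξ + b (n + 1) with hy
      rw [← Real.log_mul (by positivity) (by positivity)]
      congr 1
      field_simp
    rw [hlog]
    linarith
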